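/- Let $G$ be a simple, simply connected, compact Lie group of rank $n$ and $C_k=\bigcup_{w\in\widehat{W}_k} w(\overline{A}_0\setminus F_k)$. If $u_1,u_2\in C_k$ satisfy $u_2=w(u_1)$ for some element $w$ of the affine Weyl group $\widehat{W}$, then $w(v_k)=v_k$. -/

import Mathlib

noncomputable section

open Set Pointwise

/-- Axiomatization of the root/affine-Weyl data attached to a simple, simply connected,
compact Lie group `G` of rank `n` with maximal torus `T`: `t` is the Lie algebra of `T`
(in the coordinates `t = iH`, so that roots are real-valued and the alcove walls are the
hyperplanes `α = 2πm`, `m ∈ ℤ`), `Δ` is the set of roots, `simpleRoot` the simple roots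
of a positive system, `highest` the highest root, `W0` the Weyl group, `lattice` the
kernel of `exp|_𝔱` (i.e. `2πi R∨`), `Wa` the affine Weyl group, `v` the vertices of the
closed fundamental alcove, and `refl k` the reflection across the face `F_k` opposite
the vertex `v_k`.  The listed axioms are the standard facts for this situation. -/
structure AffineWeylSetup (n : ℕ) (t : Type*) [NormedAddCommGroup t]
    [InnerProductSpace ℝ t] [FiniteDimensional ℝ t] where
  /-- the set of roots -/
  Δ : Finset (t →ₗ[ℝ] ℝ)
  /-- the simple roots `α_1, …, α_n` -/
  simpleRoot : Fin n → (t →ₗ[ℝ] ℝ)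
  /-- the highest root `α_0` -/
  highest : t →ₗ[ℝ] ℝ
  /-- the Weyl group `W = W(G, 𝔱)` -/
  W0 : Subgroup (t ≃ₗ[ℝ] t)
  /-- the lattice `ker (exp|_𝔱) = 2πi R∨` -/
  lattice : AddSubgroup t
  /-- the affine Weyl group `Ŵ` -/
  Wa : Subgroup (t ≃ᵃ[ℝ] t)
  /-- the vertices `v_0, …, v_n` of the closed fundamental alcove -/
  v : Fin (n + 1) → t
  /-- the coroot `h_{α_0}` -/
  corootHighest : t
  /-- the coroots `h_{α_1}, …, h_{α_n}` -/
  coroot : Fin n → t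
  /-- the reflections `r_0, …, r_n` across the faces of the fundamental alcove -/
  refl : Fin (n + 1) → (t ≃ᵃ[ℝ] t)
  rank_eq : Module.finrank ℝ t = n
  simple_mem : ∀ j, simpleRoot j ∈ Δ
  highest_mem : highest ∈ Δ
  neg_mem : ∀ α ∈ Δ, -α ∈ Δ
  simple_indep : LinearIndependent ℝ simpleRoot
  /-- `α_0 = ∑ m_j α_j` with `m_j ≥ 1` -/
  highest_eq : ∃ m : Fin n → ℕ, (∀ j, 1 ≤ m j) ∧ highest = ∑ j, (m j : ℝ) • simpleRoot j
  /-- the Weyl group permutes the roots -/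
  W0_roots : ∀ w ∈ W0, ∀ α ∈ Δ, α ∘ₗ (w : t →ₗ[ℝ] t) ∈ Δ
  /-- `Ŵ` consists precisely of the transformations `x ↦ w x + z`, `w ∈ W`,
  `z ∈ ker (exp|_𝔱)` -/
  Wa_mem_iff : ∀ g : t ≃ᵃ[ℝ] t, g ∈ Wa ↔ ∃ w ∈ W0, ∃ z ∈ lattice, ∀ x, g x = w x + z
  /-- since `G` is simply connected, `ker (exp|_𝔱) = 2πi R∨` is generated by the
  (2π-rescaled) simple coroots -/
  lattice_eq : lattice = AddSubgroup.closure ((2 * Real.pi) • Set.range coroot)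
  v_zero : v 0 = 0
  /-- `α_0 (v_k) = 2π` for `1 ≤ k ≤ n` -/
  v_succ_highest : ∀ k : Fin n, highest (v k.succ) = 2 * Real.pi
  /-- `α_j (v_k) = 0` for `1 ≤ j,k ≤ n` with `j ≠ k` -/
  v_succ_simple : ∀ k j : Fin n, j ≠ k → simpleRoot j (v k.succ) = 0
  coroot_highest_norm : highest corootHighest = 2
  coroot_norm : ∀ j, simpleRoot j (coroot j) = 2
  /-- `r_0 (x) = x - (α_0(x) - 2π) h_{α_0}` -/
  refl_zero : ∀ x, refl 0 x = x - (highest x - 2 * Real.pi) • corootHighest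
  /-- `r_k (x) = x - α_k(x) h_{α_k}` for `1 ≤ k ≤ n` -/
  refl_succ : ∀ (j : Fin n) (x : t), refl j.succ x = x - simpleRoot j x • coroot j
  refl_mem : ∀ k, refl k ∈ Wa
  /-- the closure of the fundamental alcove is a fundamental domain: every point is
  `Ŵ`-conjugate to a point of it … -/
  fund_exists : ∀ x : t, ∃ g ∈ Wa,
    g x ∈ closure {y | highest y < 2 * Real.pi ∧ ∀ j, 0 < simpleRoot j y}
  /-- … and `Ŵ`-conjugate points of it are equal -/
  fund_unique : ∀ x ∈ closure {y | highest y < 2 * Real.pi ∧ ∀ j, 0 < simpleRoot j y},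
    ∀ g ∈ Wa, g x ∈ closure {y | highest y < 2 * Real.pi ∧ ∀ j, 0 < simpleRoot j y} →
      g x = x

namespace AffineWeylSetup

variable {n : ℕ} {t : Type*} [NormedAddCommGroup t] [InnerProductSpace ℝ t]
  [FiniteDimensional ℝ t] (s : AffineWeylSetup n t)

/-- The set of regular points: the complement of the alcove walls. -/
def regular : Set t := {x | ∀ α ∈ s.Δ, ∀ m : ℤ, α x ≠ 2 * Real.pi * m}

/-- The alcoves: the connected components of the set of regular points. -/
def IsAlcove (A : Set t) : Prop := ∃ x ∈ s.regular, A = connectedComponentIn s.regular x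

/-- The open fundamental alcove `A_0`. -/
def A0 : Set t := {x | s.highest x < 2 * Real.pi ∧ ∀ j, 0 < s.simpleRoot j x}

/-- The closed fundamental alcove `A̅_0`. -/
def A0cl : Set t := closure s.A0

/-- The face `F_k` of the closed fundamental alcove opposite to the vertex `v_k`. -/
def face (k : Fin (n + 1)) : Set t :=
  if h : k = 0 then {x | s.highest x = 2 * Real.pi ∧ ∀ j, 0 ≤ s.simpleRoot j x}
  else {x | s.highest x ≤ 2 * Real.pi ∧ (∀ j : Fin n, j.succ ≠ k → 0 ≤ s.simpleRoot j x) ∧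
    s.simpleRoot (k.pred h) x = 0}

/-- The stabilizer `Ŵ_k = {w ∈ Ŵ | w (v_k) = v_k}` of the vertex `v_k`. -/
def stab (k : Fin (n + 1)) : Subgroup (t ≃ᵃ[ℝ] t) where
  carrier := {g | g ∈ s.Wa ∧ g (s.v k) = s.v k}
  one_mem' := ⟨s.Wa.one_mem, rfl⟩
  mul_mem' := by
    rintro a b ⟨haW, ha⟩ ⟨hbW, hb⟩
    refine ⟨s.Wa.mul_mem haW hbW, ?_⟩
    show a (b (s.v k)) = s.v k
    rw [hb, ha]
  inv_mem' := by
    rintro a ⟨haW, ha⟩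
    refine ⟨s.Wa.inv_mem haW, ?_⟩
    show a.symm (s.v k) = s.v k
    conv_lhs => rw [← ha]
    exact a.symm_apply_apply _

/-- The cell `C_k = ⋃_{w ∈ Ŵ_k} w (A̅_0 \ F_k)`. -/
def cell (k : Fin (n + 1)) : Set t :=
  ⋃ w ∈ s.stab k, (w : t ≃ᵃ[ℝ] t) '' (s.A0cl \ s.face k)

end AffineWeylSetup

namespace AffineWeylSetup

open RealInnerProductSpace Filter

variable {n : ℕ} {t : Type*} [NormedAddCommGroup t] [InnerProductSpace ℝ t]
  [FiniteDimensional ℝ t] (s : AffineWeylSetup n t)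

set_option linter.unusedSectionVars false

/-- Linear parts of the `n+1` affine constraint functionals cutting out the alcove. -/
def cLin : Fin (n + 1) → (t →ₗ[ℝ] ℝ) := fun i => Fin.cases (-s.highest) s.simpleRoot i

/-- Constant parts of the constraint functionals. -/
def cCst : Fin (n + 1) → ℝ := fun i => Fin.cases (2 * Real.pi) (fun _ => 0) i

/-- The affine constraint functionals: the alcove is `{y | ∀ i, 0 ≤ cfun i y}`. -/
def cfun (i : Fin (n + 1)) (y : t) : ℝ := s.cLin i y + cCst i

/-- Reflection directions. -/
def dv : Fin (n + 1) → t := fun i => Fin.cases s.corootHighest (fun j => -(s.coroot j)) i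

lemma cfun_zero (y : t) : s.cfun 0 y = 2 * Real.pi - s.highest y := by
  simp only [cfun, cLin, cCst, Fin.cases_zero, LinearMap.neg_apply]
  ring

lemma cfun_succ (j : Fin n) (y : t) : s.cfun j.succ y = s.simpleRoot j y := by
  simp only [cfun, cLin, cCst, Fin.cases_succ, add_zero]

lemma cLin_dv (i : Fin (n + 1)) : s.cLin i (s.dv i) = -2 := by
  induction i using Fin.cases with
  | zero =>
    simp only [cLin, dv, Fin.cases_zero, LinearMap.neg_apply, s.coroot_highest_norm]
  | succ j =>
    simp only [cLin, dv, Fin.cases_succ, map_neg, s.coroot_norm]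

lemma dv_ne (i : Fin (n + 1)) : s.dv i ≠ 0 := by
  intro h
  have h2 := s.cLin_dv i
  rw [h, map_zero] at h2
  norm_num at h2

lemma refl_apply' (i : Fin (n + 1)) (y : t) :
    s.refl i y = y + s.cfun i y • s.dv i := by
  induction i using Fin.cases with
  | zero =>
    rw [s.refl_zero, s.cfun_zero]
    have h1 : (2 * Real.pi - s.highest y) = -(s.highest y - 2 * Real.pi) := by ring
    rw [h1, neg_smul]
    simp only [dv, Fin.cases_zero, sub_eq_add_neg]
  | succ j =>
    rw [s.refl_succ, s.cfun_succ]
    simp only [dv, Fin.cases_succ, smul_neg, sub_eq_add_neg]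

lemma cfun_affine (i : Fin (n + 1)) (y z : t) (c : ℝ) :
    s.cfun i (y + c • z) = s.cfun i y + c * s.cLin i z := by
  simp only [cfun, map_add, map_smul, smul_eq_mul]
  ring

lemma cfun_sub (i : Fin (n + 1)) (y z : t) :
    s.cLin i (y - z) = s.cfun i y - s.cfun i z := by
  simp only [cfun, map_sub]
  ring

lemma mem_A0_iff (y : t) : y ∈ s.A0 ↔ ∀ i, 0 < s.cfun i y := by
  constructor
  · rintro ⟨h1, h2⟩ i
    induction i using Fin.cases with
    | zero => rw [s.cfun_zero]; linarith
    | succ j => rw [s.cfun_succ]; exact h2 j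
  · intro h
    refine ⟨?_, fun j => ?_⟩
    · have h0 := h 0; rw [s.cfun_zero] at h0; linarith
    · have hj := h j.succ; rwa [s.cfun_succ] at hj

lemma cfun_continuous (i : Fin (n + 1)) : Continuous fun y => s.cfun i y :=
  ((s.cLin i).continuous_of_finiteDimensional).add continuous_const

lemma isOpen_A0 : IsOpen s.A0 := by
  have h : s.A0 = ⋂ i, (fun y => s.cfun i y) ⁻¹' Set.Ioi 0 := by
    ext y
    simp only [Set.mem_iInter, Set.mem_preimage, Set.mem_Ioi]
    exact s.mem_A0_iff y
  rw [h]
  exact isOpen_iInter_of_finite fun i => (s.cfun_continuous i).isOpen_preimage _ isOpen_Ioi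

lemma sep (y : t) (h : ∀ j, s.simpleRoot j y = 0) : y = 0 := by
  have hspan : Submodule.span ℝ (Set.range s.simpleRoot) = ⊤ := by
    apply Submodule.eq_top_of_finrank_eq
    rw [finrank_span_eq_card s.simple_indep, Subspace.dual_finrank_eq, s.rank_eq,
      Fintype.card_fin]
  rw [← Module.forall_dual_apply_eq_zero_iff (R := ℝ)]
  intro φ
  have hφ : φ ∈ Submodule.span ℝ (Set.range s.simpleRoot) := hspan ▸ Submodule.mem_top
  induction hφ using Submodule.span_induction with
  | mem f hf => obtain ⟨j, rfl⟩ := hf; exact h j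
  | zero => rfl
  | add f g _ _ hf hg => simp [LinearMap.add_apply, hf, hg]
  | smul c f _ hf => simp [LinearMap.smul_apply, hf]

lemma exists_A0 : ∃ a, a ∈ s.A0 := by
  -- find `u` with `α_j u = 1` for all `j`
  have hinj : Function.Injective (LinearMap.pi s.simpleRoot : t →ₗ[ℝ] (Fin n → ℝ)) := by
    rw [← LinearMap.ker_eq_bot, Submodule.eq_bot_iff]
    intro y hy
    exact s.sep y fun j => congrFun hy j
  have hsurj : Function.Surjective (LinearMap.pi s.simpleRoot : t →ₗ[ℝ] (Fin n → ℝ)) := by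
    rw [← LinearMap.injective_iff_surjective_of_finrank_eq_finrank (by simp [s.rank_eq])]
    exact hinj
  obtain ⟨u, hu⟩ := hsurj 1
  have hu' : ∀ j, s.simpleRoot j u = 1 := fun j => congrFun hu j
  obtain ⟨m, hm1, hmsum⟩ := s.highest_eq
  set M : ℝ := ∑ j, (m j : ℝ) with hM
  have hM0 : 0 ≤ M := Finset.sum_nonneg fun j _ => Nat.cast_nonneg _
  have hhu : s.highest u = M := by
    rw [hmsum]
    simp [LinearMap.sum_apply, LinearMap.smul_apply, hu', hM]
  have hpi : 0 < Real.pi := Real.pi_pos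
  refine ⟨(Real.pi / (M + 1)) • u, ?_, fun j => ?_⟩
  · show s.highest _ < _
    rw [map_smul, hhu]
    have h1 : (0:ℝ) < M + 1 := by linarith
    rw [smul_eq_mul, div_mul_eq_mul_div, div_lt_iff₀ h1]
    nlinarith
  · show 0 < s.simpleRoot j _
    rw [map_smul, hu', smul_eq_mul, mul_one]
    positivity

lemma A0cl_def : s.A0cl = closure s.A0 := rfl

lemma mem_A0cl_iff (y : t) : y ∈ s.A0cl ↔ ∀ i, 0 ≤ s.cfun i y := by
  constructor
  · intro hy
    have hcl : IsClosed {z : t | ∀ i, 0 ≤ s.cfun i z} := by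
      have h : {z : t | ∀ i, 0 ≤ s.cfun i z} = ⋂ i, (fun z => s.cfun i z) ⁻¹' Set.Ici 0 := by
        ext z; simp
      rw [h]
      exact isClosed_iInter fun i => isClosed_Ici.preimage (s.cfun_continuous i)
    have hsub : s.A0 ⊆ {z : t | ∀ i, 0 ≤ s.cfun i z} := fun z hz i =>
      le_of_lt ((s.mem_A0_iff z).1 hz i)
    exact closure_minimal hsub hcl hy
  · intro hy
    obtain ⟨a, ha⟩ := s.exists_A0
    have hmem : ∀ m : ℕ, y + (1 / ((m : ℝ) + 1)) • (a - y) ∈ s.A0 := by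
      intro m
      rw [s.mem_A0_iff]
      intro i
      rw [s.cfun_affine, s.cfun_sub]
      have h1 : 0 < 1 / ((m : ℝ) + 1) := by positivity
      have h2 : 1 / ((m : ℝ) + 1) ≤ 1 := by
        rw [div_le_one (by positivity)]
        simp [Nat.cast_nonneg]
      have h3 := hy i
      have h4 := (s.mem_A0_iff a).1 ha i
      nlinarith
    have htend : Tendsto (fun m : ℕ => y + (1 / ((m : ℝ) + 1)) • (a - y)) atTop (nhds y) := by
      have h0 : Tendsto (fun m : ℕ => (1 / ((m : ℝ) + 1)) • (a - y)) atTop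
          (nhds ((0:ℝ) • (a - y))) :=
        tendsto_one_div_add_atTop_nhds_zero_nat.smul_const _
      rw [zero_smul] at h0
      simpa using (tendsto_const_nhds.add h0)
    exact mem_closure_of_tendsto htend (Filter.Eventually.of_forall hmem)

lemma cfun_v (i k : Fin (n + 1)) (h : i ≠ k) : s.cfun i (s.v k) = 0 := by
  induction i using Fin.cases with
  | zero =>
    induction k using Fin.cases with
    | zero => exact absurd rfl h
    | succ l => rw [s.cfun_zero, s.v_succ_highest l]; ring
  | succ j =>
    induction k using Fin.cases with
    | zero => rw [s.cfun_succ, s.v_zero, map_zero]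
    | succ l =>
      rw [s.cfun_succ]
      exact s.v_succ_simple l j (fun hjl => h (by rw [hjl]))

lemma lin_apply (e : t ≃ᵃ[ℝ] t) (u : t) : e.linear u = e u - e 0 := by
  have h := e.map_vadd 0 u
  rw [vadd_eq_add, vadd_eq_add, add_zero] at h
  rw [h]; abel

lemma one_linear (u : t) : (1 : t ≃ᵃ[ℝ] t).linear u = u := by
  rw [lin_apply]
  simp

lemma mul_linear (e f : t ≃ᵃ[ℝ] t) (u : t) :
    (e * f).linear u = e.linear (f.linear u) := by
  rw [lin_apply (e * f) u, lin_apply f u]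
  have h1 : (e * f) u = e (f u) := rfl
  have h2 : (e * f) 0 = e (f 0) := rfl
  rw [h1, h2]
  have h3 := e.map_vadd (f 0) (f u - f 0)
  rw [vadd_eq_add, vadd_eq_add, sub_add_cancel] at h3
  rw [h3]
  abel

lemma refl_linear (i : Fin (n + 1)) (u : t) :
    (s.refl i).linear u = u + s.cLin i u • s.dv i := by
  rw [lin_apply, s.refl_apply', s.refl_apply']
  have h0 : s.cfun i 0 = cCst i := by simp [cfun]
  have hu : s.cfun i u = s.cLin i u + cCst i := rfl
  rw [h0, hu, add_smul]
  abel

/-- The stabilizer in `Ŵ` of an arbitrary point. -/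
def stabPt (p : t) : Subgroup (t ≃ᵃ[ℝ] t) where
  carrier := {g | g ∈ s.Wa ∧ g p = p}
  one_mem' := ⟨s.Wa.one_mem, rfl⟩
  mul_mem' := by
    rintro a b ⟨haW, ha⟩ ⟨hbW, hb⟩
    refine ⟨s.Wa.mul_mem haW hbW, ?_⟩
    show a (b p) = p
    rw [hb, ha]
  inv_mem' := by
    rintro a ⟨haW, ha⟩
    refine ⟨s.Wa.inv_mem haW, ?_⟩
    show a.symm p = p
    conv_lhs => rw [← ha]
    exact a.symm_apply_apply _

lemma mem_stabPt {p : t} {g : t ≃ᵃ[ℝ] t} : g ∈ s.stabPt p ↔ g ∈ s.Wa ∧ g p = p := Iff.rfl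

/-- The subgroup of all affine automorphisms fixing a point. -/
def fixPt (p : t) : Subgroup (t ≃ᵃ[ℝ] t) where
  carrier := {g | g p = p}
  one_mem' := rfl
  mul_mem' := by
    rintro a b ha hb
    show a (b p) = p
    rw [show b p = p from hb, show a p = p from ha]
  inv_mem' := by
    rintro a ha
    show a.symm p = p
    conv_lhs => rw [← show a p = p from ha]
    exact a.symm_apply_apply _

lemma finite_W0 : Finite ↥s.W0 := by
  have hinj : Function.Injective (fun (w : ↥s.W0) (α : ↥s.Δ) =>
      (⟨α.1 ∘ₗ (w.1 : t →ₗ[ℝ] t), s.W0_roots w.1 w.2 α.1 α.2⟩ : ↥s.Δ)) := by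
    intro w w' h
    have h' : ∀ α : ↥s.Δ, α.1 ∘ₗ (w.1 : t →ₗ[ℝ] t) = α.1 ∘ₗ (w'.1 : t →ₗ[ℝ] t) := by
      intro α
      exact congrArg Subtype.val (congrFun h α)
    apply Subtype.ext
    apply LinearEquiv.toLinearMap_injective
    apply LinearMap.ext
    intro y
    have hsep : ∀ j, s.simpleRoot j ((w.1 : t →ₗ[ℝ] t) y - (w'.1 : t →ₗ[ℝ] t) y) = 0 := by
      intro j
      have hh := congrArg (fun f : t →ₗ[ℝ] ℝ => f y) (h' ⟨s.simpleRoot j, s.simple_mem j⟩)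
      simp only [LinearMap.comp_apply] at hh
      rw [map_sub]
      simpa using sub_eq_zero.2 hh
    have h0 := s.sep _ hsep
    exact sub_eq_zero.1 h0
  exact Finite.of_injective _ hinj

lemma linear_mem_W0 {g : t ≃ᵃ[ℝ] t} (hg : g ∈ s.Wa) : g.linear ∈ s.W0 := by
  obtain ⟨w, hw, z, hz, hgy⟩ := (s.Wa_mem_iff g).1 hg
  have h : g.linear = w := by
    apply LinearEquiv.toLinearMap_injective
    apply LinearMap.ext
    intro u
    simp only [LinearEquiv.coe_coe]
    rw [lin_apply g u, hgy, hgy, map_zero]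
    simp
  rw [h]; exact hw

lemma finite_stabPt (p : t) : Finite ↥(s.stabPt p) := by
  have hW0 : Finite ↥s.W0 := s.finite_W0
  have hinj : Function.Injective
      (fun f : ↥(s.stabPt p) => (⟨f.1.linear, s.linear_mem_W0 f.2.1⟩ : ↥s.W0)) := by
    intro f f' h
    have h' : f.1.linear = f'.1.linear := congrArg Subtype.val h
    apply Subtype.ext
    apply AffineEquiv.ext
    intro y
    have e1 := f.1.map_vadd p (y - p)
    rw [vadd_eq_add, vadd_eq_add, sub_add_cancel] at e1
    have e2 := f'.1.map_vadd p (y - p)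
    rw [vadd_eq_add, vadd_eq_add, sub_add_cancel] at e2
    rw [e1, e2, h', f.2.2, f'.2.2]
  exact Finite.of_injective _ hinj

lemma fix_interior (a : t) (ha : a ∈ s.A0) (φ : t ≃ᵃ[ℝ] t) (hφ : φ ∈ s.Wa)
    (hφa : φ a = a) : φ = 1 := by
  have hfin : Finite ↥(s.stabPt a) := s.finite_stabPt a
  have hfin' : ((s.stabPt a : Set (t ≃ᵃ[ℝ] t))).Finite := by
    have h : Finite ↥(s.stabPt a : Set (t ≃ᵃ[ℝ] t)) := hfin
    exact Set.toFinite _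
  set U : Set t := ⋂ h ∈ (s.stabPt a : Set (t ≃ᵃ[ℝ] t)), ⇑h ⁻¹' s.A0 with hU
  have hUopen : IsOpen U :=
    hfin'.isOpen_biInter fun h _ =>
      (h.continuous_of_finiteDimensional).isOpen_preimage _ s.isOpen_A0
  have haU : a ∈ U := by
    rw [hU]
    simp only [Set.mem_iInter]
    intro h hh
    rw [Set.mem_preimage, hh.2]
    exact ha
  set W : Set t := U ∩ s.A0 with hW
  have hWopen : IsOpen W := hUopen.inter s.isOpen_A0
  have haW : a ∈ W := ⟨haU, ha⟩
  have hfix : ∀ y ∈ W, φ y = y := by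
    intro y hy
    have hφA0 : φ y ∈ s.A0 := by
      have hy1 := hy.1
      rw [hU] at hy1
      simp only [Set.mem_iInter] at hy1
      exact hy1 φ ⟨hφ, hφa⟩
    exact s.fund_unique y (subset_closure hy.2) φ hφ (subset_closure hφA0)
  obtain ⟨ε, hε, hball⟩ := Metric.isOpen_iff.1 hWopen a haW
  have hlin : ∀ u : t, φ.linear u = u := by
    intro u
    by_cases hu : u = 0
    · rw [hu, map_zero]
    · have hu' : 0 < ‖u‖ := norm_pos_iff.2 hu
      set τ : ℝ := ε / (2 * ‖u‖) with hτ
      have hτpos : 0 < τ := div_pos hε (by linarith)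
      have hmem : a + τ • u ∈ W := by
        apply hball
        rw [Metric.mem_ball, dist_eq_norm]
        have h5 : a + τ • u - a = τ • u := by abel
        rw [h5, norm_smul, Real.norm_eq_abs, abs_of_pos hτpos, hτ]
        have h6 : ε / (2 * ‖u‖) * ‖u‖ = ε / 2 := by
          field_simp
        rw [h6]
        linarith
      have h1 : φ (a + τ • u) = a + τ • u := hfix _ hmem
      have h2 : φ (a + τ • u) = τ • φ.linear u + a := by
        have h7 := φ.map_vadd a (τ • u)
        rw [vadd_eq_add, vadd_eq_add, add_comm] at h7
        rw [h7, map_smul, hφa]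
      rw [h2] at h1
      have h3 : τ • φ.linear u = τ • u := by
        have h8 : τ • φ.linear u + a - a = a + τ • u - a := by rw [h1]
        simpa using h8
      exact smul_right_injective t (ne_of_gt hτpos) h3
  apply AffineEquiv.ext
  intro y
  have h9 := φ.map_vadd a (y - a)
  rw [vadd_eq_add, vadd_eq_add, sub_add_cancel] at h9
  rw [h9, hlin, hφa, sub_add_cancel]
  rfl

/-- The averaged bilinear form over a finite subgroup. -/
def Bform (H0 : Subgroup (t ≃ᵃ[ℝ] t)) [Fintype ↥H0] (u v : t) : ℝ :=
  ∑ h : ↥H0, ⟪(h : t ≃ᵃ[ℝ] t).linear u, (h : t ≃ᵃ[ℝ] t).linear v⟫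

lemma Bform_exp (H0 : Subgroup (t ≃ᵃ[ℝ] t)) [Fintype ↥H0] (u d : t) (c : ℝ) :
    Bform H0 (u + c • d) (u + c • d)
      = Bform H0 u u + 2 * c * Bform H0 u d + c ^ 2 * Bform H0 d d := by
  unfold Bform
  have hterm : ∀ h : ↥H0,
      ⟪(h : t ≃ᵃ[ℝ] t).linear (u + c • d), (h : t ≃ᵃ[ℝ] t).linear (u + c • d)⟫
      = ⟪(h : t ≃ᵃ[ℝ] t).linear u, (h : t ≃ᵃ[ℝ] t).linear u⟫
        + 2 * c * ⟪(h : t ≃ᵃ[ℝ] t).linear u, (h : t ≃ᵃ[ℝ] t).linear d⟫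
        + c ^ 2 * ⟪(h : t ≃ᵃ[ℝ] t).linear d, (h : t ≃ᵃ[ℝ] t).linear d⟫ := by
    intro h
    rw [map_add, map_smul, real_inner_add_add_self, real_inner_smul_right,
      real_inner_smul_left, real_inner_smul_right]
    ring
  rw [Finset.sum_congr rfl fun h _ => hterm h, Finset.sum_add_distrib,
    Finset.sum_add_distrib, ← Finset.mul_sum, ← Finset.mul_sum]

lemma Bform_sub (H0 : Subgroup (t ≃ᵃ[ℝ] t)) [Fintype ↥H0] (u v d : t) :
    Bform H0 (u - v) d = Bform H0 u d - Bform H0 v d := by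
  unfold Bform
  rw [← Finset.sum_sub_distrib]
  apply Finset.sum_congr rfl
  intro h _
  rw [map_sub, inner_sub_left]

lemma Bform_pos (H0 : Subgroup (t ≃ᵃ[ℝ] t)) [Fintype ↥H0] (d : t) (hd : d ≠ 0) :
    0 < Bform H0 d d := by
  unfold Bform
  apply Finset.sum_pos' (fun h _ => real_inner_self_nonneg)
  refine ⟨1, Finset.mem_univ _, ?_⟩
  have h1 : ((1 : ↥H0) : t ≃ᵃ[ℝ] t).linear d = d := one_linear _
  rw [h1, real_inner_self_eq_norm_sq]
  exact pow_pos (norm_pos_iff.2 hd) 2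

lemma Bform_inv (H0 : Subgroup (t ≃ᵃ[ℝ] t)) [Fintype ↥H0] (r : t ≃ᵃ[ℝ] t) (hr : r ∈ H0)
    (u v : t) : Bform H0 (r.linear u) (r.linear v) = Bform H0 u v := by
  unfold Bform
  refine Fintype.sum_equiv (Equiv.mulRight (⟨r, hr⟩ : ↥H0))
    (fun h => ⟪(h : t ≃ᵃ[ℝ] t).linear (r.linear u), (h : t ≃ᵃ[ℝ] t).linear (r.linear v)⟫)
    (fun h => ⟪(h : t ≃ᵃ[ℝ] t).linear u, (h : t ≃ᵃ[ℝ] t).linear v⟫) ?_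
  intro h
  have e2 : Equiv.mulRight (⟨r, hr⟩ : ↥H0) h = h * ⟨r, hr⟩ := rfl
  have e1 : ((h * ⟨r, hr⟩ : ↥H0) : t ≃ᵃ[ℝ] t) = (h : t ≃ᵃ[ℝ] t) * r := rfl
  simp only [e2, e1]
  rw [mul_linear, mul_linear]

theorem fix_vertex (k : Fin (n + 1)) (x : t) (hx : x ∈ s.A0cl) (hxk : 0 < s.cfun k x)
    (g : t ≃ᵃ[ℝ] t) (hg : g ∈ s.Wa) (hgx : g x = x) : g (s.v k) = s.v k := by
  classical
  set H0 : Subgroup (t ≃ᵃ[ℝ] t) :=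
    Subgroup.closure {e | ∃ i, s.cfun i x = 0 ∧ e = s.refl i} with hH0
  have hH0le : H0 ≤ s.stabPt x := by
    rw [hH0]
    apply (Subgroup.closure_le _).2
    rintro e ⟨i, hi, rfl⟩
    refine ⟨s.refl_mem i, ?_⟩
    rw [s.refl_apply', hi, zero_smul, add_zero]
  have hH0v : H0 ≤ fixPt (s.v k) := by
    rw [hH0]
    apply (Subgroup.closure_le _).2
    rintro e ⟨i, hi, rfl⟩
    have hik : i ≠ k := by
      intro h; rw [← h, hi] at hxk; exact lt_irrefl _ hxk
    show s.refl i (s.v k) = s.v k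
    rw [s.refl_apply', s.cfun_v i k hik, zero_smul, add_zero]
  have hfinStab : Finite ↥(s.stabPt x) := s.finite_stabPt x
  have hfinH0 : Finite ↥H0 :=
    Finite.of_injective (Subgroup.inclusion hH0le) (Subgroup.inclusion_injective hH0le)
  letI : Fintype ↥H0 := Fintype.ofFinite _
  -- wall identity for the invariant bilinear form
  have hwall : ∀ i : Fin (n + 1), s.cfun i x = 0 → ∀ b : t, s.cfun i b ≠ 0 →
      Bform H0 (b - x) (s.dv i) = -(s.cfun i b) / 2 * Bform H0 (s.dv i) (s.dv i) := by
    intro i hix b hcb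
    have hrH0 : s.refl i ∈ H0 := Subgroup.subset_closure ⟨i, hix, rfl⟩
    have hlinbx : (s.refl i).linear (b - x) = (b - x) + s.cfun i b • s.dv i := by
      rw [s.refl_linear, s.cfun_sub, hix, sub_zero]
    have hinv := Bform_inv H0 (s.refl i) hrH0 (b - x) (b - x)
    rw [hlinbx, Bform_exp] at hinv
    have h2c : (2 : ℝ) * s.cfun i b ≠ 0 := mul_ne_zero two_ne_zero hcb
    apply mul_left_cancel₀ h2c
    linear_combination hinv
  -- choice of a nearby interior point
  have hfinStab' : ((s.stabPt x : Set (t ≃ᵃ[ℝ] t))).Finite := by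
    have h : Finite ↥(s.stabPt x : Set (t ≃ᵃ[ℝ] t)) := hfinStab
    exact Set.toFinite _
  set V : Set t := ⋂ i ∈ {i : Fin (n + 1) | 0 < s.cfun i x}, (fun y => s.cfun i y) ⁻¹' Set.Ioi 0
    with hV
  have hVopen : IsOpen V :=
    (Set.toFinite _).isOpen_biInter fun i _ =>
      (s.cfun_continuous i).isOpen_preimage _ isOpen_Ioi
  have hxV : x ∈ V := by
    rw [hV]
    simp only [Set.mem_iInter, Set.mem_preimage, Set.mem_Ioi, Set.mem_setOf_eq]
    intro i hi
    exact hi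
  set U : Set t := ⋂ h ∈ (s.stabPt x : Set (t ≃ᵃ[ℝ] t)), ⇑h ⁻¹' V with hU
  have hUopen : IsOpen U :=
    hfinStab'.isOpen_biInter fun h _ =>
      (h.continuous_of_finiteDimensional).isOpen_preimage _ hVopen
  have hxU : x ∈ U := by
    rw [hU]
    simp only [Set.mem_iInter]
    intro h hh
    rw [Set.mem_preimage, hh.2]
    exact hxV
  obtain ⟨a, haU, haA0⟩ := mem_closure_iff.1 hx U hUopen hxU
  have haA0' : ∀ i, 0 < s.cfun i a := (s.mem_A0_iff a).1 haA0
  -- minimize the invariant quadratic distance to `a` over the finite orbit of `g a`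
  set O : Finset t := Finset.image (fun h : ↥H0 => (h : t ≃ᵃ[ℝ] t) (g a)) Finset.univ with hO
  have hOne : O.Nonempty := ⟨g a, by
    rw [hO]
    exact Finset.mem_image.2 ⟨1, Finset.mem_univ _, rfl⟩⟩
  obtain ⟨b, hbO, hbmin⟩ := O.exists_min_image (fun b => Bform H0 (b - a) (b - a)) hOne
  obtain ⟨f, _, hfb⟩ := Finset.mem_image.1 hbO
  -- all constraints are nonnegative at `b`
  have hball : ∀ i, 0 ≤ s.cfun i b := by
    intro i
    rcases ((s.mem_A0cl_iff x).1 hx i).lt_or_eq with hi | hi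
    · -- constraint strict at x
      have hmem : (f : t ≃ᵃ[ℝ] t) * g ∈ s.stabPt x :=
        (s.stabPt x).mul_mem (hH0le f.2) ⟨hg, hgx⟩
      have hbV : b ∈ V := by
        have haU' := haU
        rw [hU] at haU'
        simp only [Set.mem_iInter] at haU'
        have h1 := haU' ((f : t ≃ᵃ[ℝ] t) * g) hmem
        rw [Set.mem_preimage] at h1
        have h2 : ((f : t ≃ᵃ[ℝ] t) * g) a = b := by
          rw [← hfb]; rfl
        rwa [h2] at h1
      rw [hV] at hbV
      simp only [Set.mem_iInter, Set.mem_preimage, Set.mem_Ioi, Set.mem_setOf_eq] at hbV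
      exact le_of_lt (hbV i hi)
    · -- constraint tight at x: reflection argument
      by_contra hneg
      push_neg at hneg
      have hix : s.cfun i x = 0 := hi.symm
      have hrH0 : s.refl i ∈ H0 := Subgroup.subset_closure ⟨i, hix, rfl⟩
      have hrbO : s.refl i b ∈ O := by
        rw [hO]
        refine Finset.mem_image.2 ⟨(⟨s.refl i, hrH0⟩ : ↥H0) * f, Finset.mem_univ _, ?_⟩
        have h1 : (((⟨s.refl i, hrH0⟩ : ↥H0) * f : ↥H0) : t ≃ᵃ[ℝ] t)
            = s.refl i * (f : t ≃ᵃ[ℝ] t) := rfl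
        rw [h1]
        show s.refl i ((f : t ≃ᵃ[ℝ] t) (g a)) = s.refl i b
        rw [hfb]
      have hcb : s.cfun i b < 0 := hneg
      have hD := Bform_pos H0 (s.dv i) (s.dv_ne i)
      have hwb := hwall i hix b (ne_of_lt hcb)
      have hwa := hwall i hix a (ne_of_gt (haA0' i))
      have hsplit : Bform H0 (b - a) (s.dv i)
          = Bform H0 (b - x) (s.dv i) - Bform H0 (a - x) (s.dv i) := by
        rw [← Bform_sub]
        congr 1
        abel
      have hrb : s.refl i b = b + s.cfun i b • s.dv i := s.refl_apply' i b
      have hQrb : Bform H0 (s.refl i b - a) (s.refl i b - a)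
          = Bform H0 (b - a) (b - a) + 2 * s.cfun i b * Bform H0 (b - a) (s.dv i)
            + (s.cfun i b) ^ 2 * Bform H0 (s.dv i) (s.dv i) := by
        rw [hrb]
        have h2 : b + s.cfun i b • s.dv i - a = (b - a) + s.cfun i b • s.dv i := by abel
        rw [h2, Bform_exp]
      have hlt : Bform H0 (s.refl i b - a) (s.refl i b - a) < Bform H0 (b - a) (b - a) := by
        rw [hQrb, hsplit, hwb, hwa]
        nlinarith [hD, hcb, haA0' i, mul_pos (haA0' i) hD]
      have hge := hbmin _ hrbO
      linarith
  -- conclude via the fundamental domain property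
  have hbA0cl : b ∈ s.A0cl := (s.mem_A0cl_iff b).2 hball
  have haA0cl : a ∈ s.A0cl := subset_closure haA0
  have hfgWa : (f : t ≃ᵃ[ℝ] t) * g ∈ s.Wa := s.Wa.mul_mem (hH0le f.2).1 hg
  have hfgb : ((f : t ≃ᵃ[ℝ] t) * g) a = b := by rw [← hfb]; rfl
  have hfga : ((f : t ≃ᵃ[ℝ] t) * g) a = a := by
    apply s.fund_unique a haA0cl _ hfgWa
    rw [hfgb]
    exact hbA0cl
  have hfg1 : (f : t ≃ᵃ[ℝ] t) * g = 1 := s.fix_interior a haA0 _ hfgWa hfga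
  have hginv : g = (f : t ≃ᵃ[ℝ] t)⁻¹ := by
    have h1 : (f : t ≃ᵃ[ℝ] t)⁻¹ * ((f : t ≃ᵃ[ℝ] t) * g) = (f : t ≃ᵃ[ℝ] t)⁻¹ * 1 := by
      rw [hfg1]
    rw [inv_mul_cancel_left, mul_one] at h1
    exact h1
  have hfv : (f : t ≃ᵃ[ℝ] t) ∈ fixPt (s.v k) := hH0v f.2
  have hgv : g ∈ fixPt (s.v k) := by
    rw [hginv]
    exact (fixPt (s.v k)).inv_mem hfv
  exact hgv

lemma pos_of_not_face (k : Fin (n + 1)) (x : t) (hx : x ∈ s.A0cl) (hf : x ∉ s.face k) :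
    0 < s.cfun k x := by
  have h := (s.mem_A0cl_iff x).1 hx
  rcases (h k).lt_or_eq with hk | hk
  · exact hk
  · exfalso
    apply hf
    by_cases h0 : k = 0
    · subst h0
      rw [face, dif_pos rfl]
      constructor
      · have h1 := hk.symm
        rw [s.cfun_zero] at h1
        linarith
      · intro j
        have h1 := h j.succ
        rwa [s.cfun_succ] at h1
    · rw [face, dif_neg h0]
      refine ⟨?_, ?_, ?_⟩
      · have h1 := h 0
        rw [s.cfun_zero] at h1
        linarith
      · intro j _
        have h1 := h j.succ
        rwa [s.cfun_succ] at h1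
      · have hks : (k.pred h0).succ = k := Fin.succ_pred k h0
        have h1 := hk.symm
        rw [← hks, s.cfun_succ] at h1
        exact h1

end AffineWeylSetup

/-!
STATEMENT 7: Let `G` be a simple, simply connected, compact Lie group of rank `n` and
`C_k = ⋃_{w ∈ Ŵ_k} w (A̅_0 \\ F_k)`.  If `u_1, u_2 ∈ C_k` satisfy `u_2 = w (u_1)` for some
element `w` of the affine Weyl group `Ŵ`, then `w (v_k) = v_k`.
-/
theorem cell_conjugate_points_fix_vertex
    {n : ℕ} {t : Type*} [NormedAddCommGroup t] [InnerProductSpace ℝ t]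
    [FiniteDimensional ℝ t] (s : AffineWeylSetup n t) (k : Fin (n + 1)) :
    ∀ u₁ ∈ s.cell k, ∀ u₂ ∈ s.cell k, ∀ w ∈ s.Wa, w u₁ = u₂ → w (s.v k) = s.v k := by
  intro u₁ hu₁ u₂ hu₂ w hw hwu
  simp only [AffineWeylSetup.cell, Set.mem_iUnion, Set.mem_image] at hu₁ hu₂
  obtain ⟨w₁, hw₁, x₁, hx₁, hx₁u⟩ := hu₁
  obtain ⟨w₂, hw₂, x₂, hx₂, hx₂u⟩ := hu₂
  have hw₁' : w₁ ∈ s.Wa ∧ w₁ (s.v k) = s.v k := hw₁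
  have hw₂' : w₂ ∈ s.Wa ∧ w₂ (s.v k) = s.v k := hw₂
  set g : t ≃ᵃ[ℝ] t := w₂⁻¹ * w * w₁ with hgdef
  have hgWa : g ∈ s.Wa := s.Wa.mul_mem (s.Wa.mul_mem (s.Wa.inv_mem hw₂'.1) hw) hw₁'.1
  have hgx : g x₁ = x₂ := by
    show w₂⁻¹ (w (w₁ x₁)) = x₂
    rw [hx₁u, hwu, ← hx₂u]
    show (w₂⁻¹ * w₂) x₂ = x₂
    rw [inv_mul_cancel]
    rfl
  have hgfix : g x₁ = x₁ := s.fund_unique x₁ hx₁.1 g hgWa (by rw [hgx]; exact hx₂.1)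
  have hck : 0 < s.cfun k x₁ := s.pos_of_not_face k x₁ hx₁.1 hx₁.2
  have hgv : g (s.v k) = s.v k := s.fix_vertex k x₁ hx₁.1 hck g hgWa hgfix
  have hw₁invmem : w₁⁻¹ ∈ s.stab k := (s.stab k).inv_mem hw₁
  have hw₁inv : w₁⁻¹ (s.v k) = s.v k := hw₁invmem.2
  have he : w = w₂ * g * w₁⁻¹ := by
    rw [hgdef]
    group
  rw [he]
  show w₂ (g (w₁⁻¹ (s.v k))) = s.v k
  rw [hw₁inv, hgv, hw₂'.2]
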